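/- Let f₁, g₁, p₁, q₁ and f₂, g₂, p₂, q₂ be polynomials in ℤ[X] such that the 2×2 matrices M₁ = [[f₁, -q₁],[g₁, p₁]] and M₂ = [[f₂, -q₂],[g₂, p₂]] both have determinant 1, f₁ is monic of degree n₁ with deg(g₁) < n₁, deg(p₁) < n₁ - 1, deg(q₁) < n₁, and likewise for index 2 with degree n₂. Define [[f₃, -q₃],[g₃, p₃]] := M₁ · M₂. Then f₃ = f₁f₂ - q₁g₂ is monic of degree n₁ + n₂, g₃ = g₁f₂ + p₁g₂ has degree strictly less than n₁ + n₂, and the matrix [[f₃, -q₃],[g₃, p₃]] has determinant 1. -/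

import Mathlib

open Polynomial

lemma degree_mul_lt_aux (a b : Polynomial ℤ) {n m : ℕ} (ha : a.degree < n)
    (hb : b.degree < m) : (a * b).degree < ((n + m : ℕ) : WithBot ℕ) := by
  rw [degree_mul]
  push_cast
  by_cases hb0 : b = 0
  · simp [hb0]
  exact WithBot.add_lt_add_of_lt_of_le (degree_ne_bot.mpr hb0) ha hb.le

/-- if `M₁ = [[f₁,-q₁],[g₁,p₁]]` and `M₂ = [[f₂,-q₂],[g₂,p₂]]` are
matrices over `ℤ[X]` of determinant `1` with `f₁` monic of degree `n₁`, `deg g₁ < n₁`,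
`deg p₁ < n₁ - 1`, `deg q₁ < n₁` (and likewise for index 2 with degree `n₂`), then in
the product `M₁·M₂ = [[f₃,-q₃],[g₃,p₃]]` the entry `f₃ = f₁f₂ - q₁g₂` is monic of
degree `n₁+n₂`, `g₃ = g₁f₂ + p₁g₂` has degree `< n₁+n₂`, and the product matrix has
determinant `1`. -/
theorem naive_sum_wellDefined (n₁ n₂ : ℕ)
    (f₁ g₁ p₁ q₁ f₂ g₂ p₂ q₂ : Polynomial ℤ)
    (hf₁ : f₁.Monic) (hf₁n : f₁.natDegree = n₁) (hg₁ : g₁.degree < (n₁ : ℕ))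
    (hp₁ : p₁.degree + 1 < (n₁ : ℕ)) (hq₁ : q₁.degree < (n₁ : ℕ))
    (hf₂ : f₂.Monic) (hf₂n : f₂.natDegree = n₂) (hg₂ : g₂.degree < (n₂ : ℕ))
    (hp₂ : p₂.degree + 1 < (n₂ : ℕ)) (hq₂ : q₂.degree < (n₂ : ℕ))
    (hdet₁ : Matrix.det !![f₁, -q₁; g₁, p₁] = 1)
    (hdet₂ : Matrix.det !![f₂, -q₂; g₂, p₂] = 1) :
    (!![f₁, -q₁; g₁, p₁] * !![f₂, -q₂; g₂, p₂]) 0 0 = f₁ * f₂ - q₁ * g₂ ∧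
    (!![f₁, -q₁; g₁, p₁] * !![f₂, -q₂; g₂, p₂]) 1 0 = g₁ * f₂ + p₁ * g₂ ∧
    (f₁ * f₂ - q₁ * g₂).Monic ∧
    (f₁ * f₂ - q₁ * g₂).natDegree = n₁ + n₂ ∧
    (g₁ * f₂ + p₁ * g₂).degree < ((n₁ + n₂ : ℕ)) ∧
    Matrix.det (!![f₁, -q₁; g₁, p₁] * !![f₂, -q₂; g₂, p₂]) = 1 := by
  have hff : (f₁ * f₂).Monic := hf₁.mul hf₂
  have hffdeg : (f₁ * f₂).degree = ((n₁ + n₂ : ℕ) : WithBot ℕ) := by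
    rw [degree_mul, degree_eq_natDegree hf₁.ne_zero, degree_eq_natDegree hf₂.ne_zero,
      hf₁n, hf₂n]
    push_cast; ring
  have hqg : (q₁ * g₂).degree < ((n₁ + n₂ : ℕ) : WithBot ℕ) :=
    degree_mul_lt_aux _ _ hq₁ hg₂
  have hmonic : (f₁ * f₂ - q₁ * g₂).Monic := by
    have := hff.add_of_left (q := -(q₁ * g₂)) (by rwa [degree_neg, hffdeg])
    rwa [← sub_eq_add_neg] at this
  have hdeg3 : (f₁ * f₂ - q₁ * g₂).degree = ((n₁ + n₂ : ℕ) : WithBot ℕ) := by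
    rw [sub_eq_add_neg, degree_add_eq_left_of_degree_lt (by rwa [degree_neg, hffdeg]),
      hffdeg]
  have hgf : (g₁ * f₂).degree < ((n₁ + n₂ : ℕ) : WithBot ℕ) := by
    rw [degree_mul]
    push_cast
    refine WithBot.add_lt_add_of_lt_of_le (degree_ne_bot.mpr hf₂.ne_zero) hg₁ ?_
    rw [degree_eq_natDegree hf₂.ne_zero, hf₂n]
  have hp₁' : p₁.degree < (n₁ : WithBot ℕ) := by
    refine lt_of_le_of_lt ?_ hp₁
    exact le_add_of_nonneg_right (by norm_num)
  have hpg : (p₁ * g₂).degree < ((n₁ + n₂ : ℕ) : WithBot ℕ) :=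
    degree_mul_lt_aux _ _ hp₁' hg₂
  refine ⟨?_, ?_, hmonic, ?_, ?_, ?_⟩
  · simp [Matrix.mul_apply, Fin.sum_univ_two] <;> ring
  · simp [Matrix.mul_apply, Fin.sum_univ_two] <;> ring
  · exact natDegree_eq_of_degree_eq_some hdeg3
  · exact lt_of_le_of_lt (degree_add_le _ _) (max_lt hgf hpg)
  · rw [Matrix.det_mul, hdet₁, hdet₂, mul_one]
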